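/- arXiv:2103.01619 — 2 statements merged into one kernel-verified Lean document; each statement's English description precedes it below -/
import Mathlib

section
/- (Inheritance of G1 continuity by motion mode.) Suppose C'(u⁻) = β₁·C'(u⁺) with β₁ > 0, and for every r ∈ ℝ² the wheel derivative C'(u⁻) + θ'(u⁻)·J·R(θ)·r is a positive scalar multiple of C'(u⁺) + θ'(u⁺)·J·R(θ)·r (with the same orientation value θ at the junction). If C'(u⁺) ≠ 0, then θ'(u⁻) = β₁·θ'(u⁺), and each wheel's scalar multiple equals β₁. -/
noncomputable def rot (φ : ℝ) (v : ℝ × ℝ) : ℝ × ℝ :=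
  (Real.cos φ * v.1 - Real.sin φ * v.2, Real.sin φ * v.1 + Real.cos φ * v.2)

/-- Rotation by π/2. -/
def Jrot (v : ℝ × ℝ) : ℝ × ℝ := (-v.2, v.1)

/-- Inheritance of G1 continuity by the motion mode: if the curve is G1 with
shape parameter β₁ and every wheel path is G1 (with some positive scalar), then
θ' is G1 with the same β₁, and every wheel's scalar equals β₁. -/
theorem motion_mode_inherits_G1 (a' b' : ℝ × ℝ) (θ θm' θp' β₁ : ℝ)
    (hβ₁ : 0 < β₁) (hb : b' ≠ 0)
    (hG1 : a' = β₁ • b')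
    (hwheel : ∀ r : ℝ × ℝ, ∃ β : ℝ, 0 < β ∧
      a' + θm' • Jrot (rot θ r) = β • (b' + θp' • Jrot (rot θ r))) :
    θm' = β₁ * θp' ∧
    ∀ r : ℝ × ℝ, ∀ β : ℝ, 0 < β →
      a' + θm' • Jrot (rot θ r) = β • (b' + θp' • Jrot (rot θ r)) →
      b' + θp' • Jrot (rot θ r) ≠ 0 → β = β₁ := by
  obtain ⟨β, hβpos, heq⟩ := hwheel (rot (-θ) b')
  have hw : rot θ (rot (-θ) b') = b' := by
    have h := Real.sin_sq_add_cos_sq θ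
    simp only [rot, Real.cos_neg, Real.sin_neg]
    obtain ⟨x, y⟩ := b'
    simp only [Prod.mk.injEq]
    constructor
    · linear_combination x * h
    · linear_combination y * h
  rw [hw, hG1] at heq
  obtain ⟨x, y⟩ := b'
  have hxy : x ^ 2 + y ^ 2 ≠ 0 := by
    intro h
    apply hb
    have hx : x = 0 := by nlinarith [sq_nonneg x, sq_nonneg y]
    have hy : y = 0 := by nlinarith [sq_nonneg x, sq_nonneg y]
    simp [hx, hy]
  simp only [Jrot, Prod.smul_mk, Prod.mk_add_mk, Prod.mk.injEq, smul_eq_mul] at heq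
  obtain ⟨e1, e2⟩ := heq
  have hA : (β₁ - β) * (x ^ 2 + y ^ 2) = 0 := by linear_combination x * e1 + y * e2
  have hA0 : β₁ = β := by
    have := mul_eq_zero.mp hA
    rcases this with h | h
    · linarith
    · exact absurd h hxy
  have hB : (θm' - β * θp') * (x ^ 2 + y ^ 2) = 0 := by linear_combination (-y) * e1 + x * e2
  have hB0 : θm' = β * θp' := by
    have := mul_eq_zero.mp hB
    rcases this with h | h
    · linarith
    · exact absurd h hxy
  subst hA0
  refine ⟨hB0, ?_⟩
  intro r γ hγ heq2 hne
  have hlhs : a' + θm' • Jrot (rot θ r) = β₁ • ((x, y) + θp' • Jrot (rot θ r)) := by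
    rw [hG1, hB0, smul_add, smul_smul]
  rw [hlhs] at heq2
  have : (β₁ - γ) • ((x, y) + θp' • Jrot (rot θ r)) = 0 := by
    rw [sub_smul, heq2, sub_self]
  rcases smul_eq_zero.mp this with h | h
  · linarith
  · exact absurd h hne
end

section
/- If C and θ are both G2 continuous at a junction with shared shape parameters β₁ > 0, β₂ ∈ ℝ (i.e., C'(u⁻)=β₁C'(u⁺), C''(u⁻)=β₁²C''(u⁺)+β₂C'(u⁺), θ'(u⁻)=β₁θ'(u⁺), θ''(u⁻)=β₁²θ''(u⁺)+β₂θ'(u⁺), and θ, C agree at the junction), then for every r ∈ ℝ² the wheel path C_w(u) = C(u) + R(θ(u))·r is G2 continuous at the junction with the same β₁, β₂. -/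
/-- If curve and motion mode are G2 continuous at the junction with shared
shape parameters β₁, β₂, then every wheel path is G2 continuous with the same
parameters.  Here C_w' = C' + θ'·J·R(θ)·r and
C_w'' = C'' + θ''·J·R(θ)·r − (θ')²·R(θ)·r. -/
theorem wheel_path_G2_of_curve_and_mode_G2
    (a' a'' b' b'' : ℝ × ℝ) (θ θm' θp' θm'' θp'' β₁ β₂ : ℝ)
    (hβ₁ : 0 < β₁)
    (hC1 : a' = β₁ • b')
    (hC2 : a'' = β₁ ^ 2 • b'' + β₂ • b')
    (hθ1 : θm' = β₁ * θp')
    (hθ2 : θm'' = β₁ ^ 2 * θp'' + β₂ * θp') :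
    ∀ r : ℝ × ℝ,
      (a' + θm' • Jrot (rot θ r) = β₁ • (b' + θp' • Jrot (rot θ r))) ∧
      (a'' + θm'' • Jrot (rot θ r) - θm' ^ 2 • rot θ r =
        β₁ ^ 2 • (b'' + θp'' • Jrot (rot θ r) - θp' ^ 2 • rot θ r) +
        β₂ • (b' + θp' • Jrot (rot θ r))) := by
  intro r
  subst hC1 hC2 hθ1 hθ2
  constructor <;>
  · ext <;> simp [Prod.ext_iff, Prod.smul_def, Prod.add_def, Prod.sub_def, Jrot, smul_eq_mul] <;> ring
end
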